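/- arXiv:1803.04916 — 3 statements merged into one kernel-verified Lean document; each statement's English description precedes it below -/
import Mathlib

section
/- The correction terms sum to zero: ∑_{c ∈ ℤ} δ(c) = 0 (in particular the family (δ(c))_{c ∈ ℤ} is summable). -/
open MeasureTheory ProbabilityTheory
open scoped ENNReal

lemma aux_hasSum_fiber {Ω β : Type*} [MeasurableSpace Ω] [MeasurableSpace β]
    [MeasurableSingletonClass β] [Countable β]
    (μ : Measure Ω) [IsFiniteMeasure μ] {f : Ω → β} (hf : Measurable f)
    {B : Set Ω} (hB : MeasurableSet B) :
    HasSum (fun b : β => (μ ({ω | f ω = b} ∩ B)).toReal) (μ B).toReal := by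
  have hd : Pairwise (Function.onFun Disjoint fun b => {ω | f ω = b} ∩ B) := by
    intro b b' hbb'
    refine Set.disjoint_left.mpr ?_
    rintro ω ⟨h1, -⟩ ⟨h2, -⟩
    exact hbb' (h1.symm.trans h2)
  have hm : ∀ b, MeasurableSet ({ω | f ω = b} ∩ B) :=
    fun b => (hf (measurableSet_singleton b)).inter hB
  have hU : (⋃ b, ({ω | f ω = b} ∩ B)) = B := by
    ext ω; simp
  have h1 : μ B = ∑' b, μ ({ω | f ω = b} ∩ B) := by
    have := measure_iUnion (μ := μ) hd hm
    rw [hU] at this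
    exact this
  have h2 := ENNReal.hasSum_toReal (f := fun b => μ ({ω | f ω = b} ∩ B))
    (by rw [← h1]; exact measure_ne_top μ B)
  have h3 : (∑' b, (μ ({ω | f ω = b} ∩ B)).toReal) = (μ B).toReal := by
    rw [h1, ENNReal.tsum_toReal_eq (fun b => measure_ne_top μ _)]
  rwa [h3] at h2

lemma aux_hasSum_ne {β : Type*} {f : β → ℝ} {S : ℝ} (h : HasSum f S) (s : β) :
    HasSum (fun b : {x : β // x ≠ s} => f b) (S - f s) := by
  classical
  have h2 := (Finset.hasSum_iff_compl (f := f) ({s} : Finset β)).mp h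
  rw [Finset.sum_singleton] at h2
  exact ((Equiv.subtypeEquivRight (fun x => by simp)).hasSum_iff).mpr h2

/-- In the setting of the conditional-velocity formula (position `X`,
velocity `V`, space configuration `Z` with values in a countable space `𝒮`, fixed `s`
with `P[Z = s] > 0`, transition probabilities `α(a+c, a) := P[V = c | X = a]` and
correction terms
`δ(c) := (1/P[Z=s]) ∑_{s' ≠ s} ( ∑_a α(a+c,a) P[X=a, Z=s'] − P[V=c, Z=s'] )`),
the correction terms sum to zero: `∑_{c ∈ ℤ} δ(c) = 0`, and in particular the family
`(δ(c))_{c ∈ ℤ}` is summable. -/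
theorem correction_terms_sum_to_zero
    {Ω 𝒮 : Type*} [MeasurableSpace Ω] [MeasurableSpace 𝒮] [MeasurableSingletonClass 𝒮]
    [Countable 𝒮]
    (μ : Measure Ω) [IsProbabilityMeasure μ]
    (X V : Ω → ℤ) (Z : Ω → 𝒮)
    (hX : Measurable X) (hV : Measurable V) (hZ : Measurable Z)
    (s : 𝒮) (hs : 0 < (μ {ω | Z ω = s}).toReal)
    (α : ℤ → ℤ → ℝ)
    (hα : ∀ a c : ℤ, α (a + c) a =
      if 0 < (μ {ω | X ω = a}).toReal
      then (μ {ω | V ω = c ∧ X ω = a}).toReal / (μ {ω | X ω = a}).toReal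
      else 0)
    (δ : ℤ → ℝ)
    (hδ : ∀ c : ℤ, δ c = (1 / (μ {ω | Z ω = s}).toReal) *
      ∑' s' : {s' : 𝒮 // s' ≠ s},
        ((∑' a : ℤ, α (a + c) a * (μ {ω | X ω = a ∧ Z ω = (s' : 𝒮)}).toReal)
          - (μ {ω | V ω = c ∧ Z ω = (s' : 𝒮)}).toReal)) :
    HasSum δ 0 := by
  classical
  -- abbreviations
  obtain ⟨F, hF⟩ : ∃ F : ℤ → ℤ → ℝ,
      F = fun a c => α (a + c) a * (μ {ω | X ω = a ∧ Z ω = s}).toReal := ⟨_, rfl⟩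
  -- nonnegativity of α
  have hα_nn : ∀ a c : ℤ, 0 ≤ α (a + c) a := by
    intro a c
    rw [hα]
    split
    · exact div_nonneg ENNReal.toReal_nonneg ENNReal.toReal_nonneg
    · exact le_rfl
  -- vanishing of subsets of null fibers
  have hXzero : ∀ a : ℤ, ¬ 0 < (μ {ω | X ω = a}).toReal →
      ∀ A : Set Ω, A ⊆ {ω | X ω = a} → (μ A).toReal = 0 := by
    intro a ha A hA
    have h1 : (μ {ω | X ω = a}).toReal = 0 :=
      le_antisymm (not_lt.mp ha) ENNReal.toReal_nonneg
    have h2 : μ {ω | X ω = a} = 0 := by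
      rcases (ENNReal.toReal_eq_zero_iff _).mp h1 with h | h
      · exact h
      · exact absurd h (measure_ne_top μ _)
    have : μ A = 0 := le_antisymm (h2 ▸ measure_mono hA) zero_le
    simp [this]
  -- Step A: fiberwise (over c) sums of F
  have hA : ∀ a : ℤ, HasSum (fun c : ℤ => F a c) ((μ {ω | X ω = a ∧ Z ω = s}).toReal) := by
    intro a
    by_cases hpos : 0 < (μ {ω | X ω = a}).toReal
    · have hfib := aux_hasSum_fiber (B := {ω | X ω = a}) μ hV (hX (measurableSet_singleton a))
      have hmul := hfib.mul_left
        ((μ {ω | X ω = a ∧ Z ω = s}).toReal / (μ {ω | X ω = a}).toReal)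
      have heq : ∀ c : ℤ,
          (μ {ω | X ω = a ∧ Z ω = s}).toReal / (μ {ω | X ω = a}).toReal
            * (μ ({ω | V ω = c} ∩ {ω | X ω = a})).toReal = F a c := by
        intro c
        have hset : {ω | V ω = c} ∩ {ω | X ω = a} = {ω | V ω = c ∧ X ω = a} := by
          ext ω; simp [Set.mem_setOf_eq, Set.mem_inter_iff]
        rw [hF]
        simp only [hset, hα a c, if_pos hpos]
        ring
      have hval : (μ {ω | X ω = a ∧ Z ω = s}).toReal / (μ {ω | X ω = a}).toReal
          * (μ {ω | X ω = a}).toReal = (μ {ω | X ω = a ∧ Z ω = s}).toReal := by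
        field_simp
      rw [hval, funext heq] at hmul
      exact hmul
    · have h0 : (μ {ω | X ω = a ∧ Z ω = s}).toReal = 0 :=
        hXzero a hpos _ (fun ω hω => hω.1)
      rw [hF]
      simp only [h0, mul_zero]
      exact hasSum_zero
  -- Step B: partition of {Z = s} along X-fibers
  have hB : HasSum (fun a : ℤ => (μ {ω | X ω = a ∧ Z ω = s}).toReal)
      ((μ {ω | Z ω = s}).toReal) := by
    have := aux_hasSum_fiber (B := {ω | Z ω = s}) μ hX (hZ (measurableSet_singleton s))
    have hset : ∀ a : ℤ, ({ω | X ω = a} ∩ {ω | Z ω = s}) = {ω | X ω = a ∧ Z ω = s} := by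
      intro a; ext ω; simp [Set.mem_setOf_eq]
    simpa only [hset] using this
  -- Step C/D: summability and sum of F over the product index
  have hFnn : ∀ p : ℤ × ℤ, 0 ≤ F p.1 p.2 := by
    intro p
    rw [hF]
    exact mul_nonneg (hα_nn p.1 p.2) ENNReal.toReal_nonneg
  have hFsummable : Summable (fun p : ℤ × ℤ => F p.1 p.2) := by
    refine (summable_prod_of_nonneg hFnn).mpr ⟨fun a => (hA a).summable, ?_⟩
    exact hB.summable.congr (fun a => ((hA a).tsum_eq).symm)
  have hFhasSum : HasSum (fun p : ℤ × ℤ => F p.1 p.2) ((μ {ω | Z ω = s}).toReal) := by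
    have h := hFsummable.hasSum
    have heq : (∑' p : ℤ × ℤ, F p.1 p.2) = (μ {ω | Z ω = s}).toReal := by
      rw [Summable.tsum_prod' hFsummable (fun a => (hA a).summable)]
      rw [tsum_congr (fun a => (hA a).tsum_eq)]
      exact hB.tsum_eq
    rwa [heq] at h
  -- fiber summability in the other direction
  have hfibc : ∀ c : ℤ, Summable (fun a : ℤ => F a c) := by
    intro c
    have h2 : Summable (fun p : ℤ × ℤ => F p.2 p.1) :=
      (Equiv.prodComm ℤ ℤ).summable_iff.mpr hFsummable
    exact h2.prod_factor c
  -- Step E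
  have hE : HasSum (fun c : ℤ => ∑' a : ℤ, F a c) ((μ {ω | Z ω = s}).toReal) := by
    have hswap : HasSum (fun p : ℤ × ℤ => F p.2 p.1) ((μ {ω | Z ω = s}).toReal) :=
      (Equiv.prodComm ℤ ℤ).hasSum_iff.mpr hFhasSum
    exact hswap.prod_fiberwise (fun c => (hfibc c).hasSum)
  -- per-c computation of the inner tsum
  have hTc : ∀ c : ℤ,
      (∑' s' : {s' : 𝒮 // s' ≠ s},
        ((∑' a : ℤ, α (a + c) a * (μ {ω | X ω = a ∧ Z ω = (s' : 𝒮)}).toReal)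
          - (μ {ω | V ω = c ∧ Z ω = (s' : 𝒮)}).toReal))
      = (μ {ω | V ω = c ∧ Z ω = s}).toReal - ∑' a : ℤ, F a c := by
    intro c
    obtain ⟨G, hG⟩ : ∃ G : ℤ → {s' : 𝒮 // s' ≠ s} → ℝ,
        G = fun (a : ℤ) (s' : {s' : 𝒮 // s' ≠ s}) =>
          α (a + c) a * (μ {ω | X ω = a ∧ Z ω = (s' : 𝒮)}).toReal := ⟨_, rfl⟩
    have hGa : ∀ a : ℤ, HasSum (fun s' : {s' : 𝒮 // s' ≠ s} => G a s')
        ((μ {ω | V ω = c ∧ X ω = a}).toReal - F a c) := by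
      intro a
      have hfib := aux_hasSum_fiber (B := {ω | X ω = a}) μ hZ (hX (measurableSet_singleton a))
      have hset : ∀ b : 𝒮, ({ω | Z ω = b} ∩ {ω | X ω = a}) = {ω | X ω = a ∧ Z ω = b} := by
        intro b; ext ω; exact ⟨fun h => ⟨h.2, h.1⟩, fun h => ⟨h.2, h.1⟩⟩
      simp only [hset] at hfib
      have hne := aux_hasSum_ne hfib s
      have hmul := hne.mul_left (α (a + c) a)
      have hval : α (a + c) a *
            ((μ {ω | X ω = a}).toReal - (μ {ω | X ω = a ∧ Z ω = s}).toReal)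
          = (μ {ω | V ω = c ∧ X ω = a}).toReal - F a c := by
        simp only [hF]
        by_cases hpos : 0 < (μ {ω | X ω = a}).toReal
        · have hne0 : (μ {ω | X ω = a}).toReal ≠ 0 := ne_of_gt hpos
          rw [hα a c, if_pos hpos]
          field_simp
        · have h1 : (μ {ω | V ω = c ∧ X ω = a}).toReal = 0 :=
            hXzero a hpos _ (fun ω hω => hω.2)
          rw [hα a c, if_neg hpos]
          simp [h1]
      rw [hval] at hmul
      simp only [hG]
      exact hmul
    have hGnn : ∀ p : ℤ × {s' : 𝒮 // s' ≠ s}, 0 ≤ G p.1 p.2 := by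
      intro p
      simp only [hG]
      exact mul_nonneg (hα_nn _ _) ENNReal.toReal_nonneg
    have hVXa : HasSum (fun a : ℤ => (μ {ω | V ω = c ∧ X ω = a}).toReal)
        ((μ {ω | V ω = c}).toReal) := by
      have := aux_hasSum_fiber (B := {ω | V ω = c}) μ hX (hV (measurableSet_singleton c))
      have hset : ∀ a : ℤ, ({ω | X ω = a} ∩ {ω | V ω = c}) = {ω | V ω = c ∧ X ω = a} := by
        intro a; ext ω; exact ⟨fun h => ⟨h.2, h.1⟩, fun h => ⟨h.2, h.1⟩⟩
      simpa only [hset] using this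
    have hGsummable : Summable (fun p : ℤ × {s' : 𝒮 // s' ≠ s} => G p.1 p.2) := by
      refine (summable_prod_of_nonneg hGnn).mpr ⟨fun a => (hGa a).summable, ?_⟩
      have h2 : Summable (fun a : ℤ => (μ {ω | V ω = c ∧ X ω = a}).toReal - F a c) :=
        (hVXa.sub (hfibc c).hasSum).summable
      exact h2.congr (fun a => ((hGa a).tsum_eq).symm)
    have hGhasSum : HasSum (fun p : ℤ × {s' : 𝒮 // s' ≠ s} => G p.1 p.2)
        ((μ {ω | V ω = c}).toReal - ∑' a : ℤ, F a c) := by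
      have h := hGsummable.hasSum
      have heq : (∑' p : ℤ × {s' : 𝒮 // s' ≠ s}, G p.1 p.2)
          = (μ {ω | V ω = c}).toReal - ∑' a : ℤ, F a c := by
        rw [Summable.tsum_prod' hGsummable (fun a => (hGa a).summable)]
        rw [tsum_congr (fun a => (hGa a).tsum_eq)]
        exact (hVXa.sub (hfibc c).hasSum).tsum_eq
      rwa [heq] at h
    have hg1 : HasSum (fun s' : {s' : 𝒮 // s' ≠ s} => ∑' a : ℤ, G a s')
        ((μ {ω | V ω = c}).toReal - ∑' a : ℤ, F a c) := by
      have hswap : HasSum (fun p : {s' : 𝒮 // s' ≠ s} × ℤ => G p.2 p.1)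
          ((μ {ω | V ω = c}).toReal - ∑' a : ℤ, F a c) :=
        (Equiv.prodComm {s' : 𝒮 // s' ≠ s} ℤ).hasSum_iff
          (f := fun p : ℤ × {s' : 𝒮 // s' ≠ s} => G p.1 p.2) |>.mpr hGhasSum
      have hfib2 : ∀ s' : {s' : 𝒮 // s' ≠ s}, Summable (fun a : ℤ => G a s') := by
        intro s'
        have h2 : Summable (fun p : {s' : 𝒮 // s' ≠ s} × ℤ => G p.2 p.1) :=
          (Equiv.prodComm {s' : 𝒮 // s' ≠ s} ℤ).summable_iff
            (f := fun p : ℤ × {s' : 𝒮 // s' ≠ s} => G p.1 p.2) |>.mpr hGsummable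
        exact h2.prod_factor s'
      exact hswap.prod_fiberwise (fun s' => (hfib2 s').hasSum)
    have hg2 : HasSum (fun s' : {s' : 𝒮 // s' ≠ s} => (μ {ω | V ω = c ∧ Z ω = (s' : 𝒮)}).toReal)
        ((μ {ω | V ω = c}).toReal - (μ {ω | V ω = c ∧ Z ω = s}).toReal) := by
      have := aux_hasSum_fiber (B := {ω | V ω = c}) μ hZ (hV (measurableSet_singleton c))
      have hset : ∀ b : 𝒮, ({ω | Z ω = b} ∩ {ω | V ω = c}) = {ω | V ω = c ∧ Z ω = b} := by
        intro b; ext ω; exact ⟨fun h => ⟨h.2, h.1⟩, fun h => ⟨h.2, h.1⟩⟩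
      simp only [hset] at this
      exact aux_hasSum_ne this s
    have hdiff := hg1.sub hg2
    simp only [hG] at hdiff
    rw [hdiff.tsum_eq]
    ring
  -- final assembly
  have hVZ : HasSum (fun c : ℤ => (μ {ω | V ω = c ∧ Z ω = s}).toReal)
      ((μ {ω | Z ω = s}).toReal) := by
    have := aux_hasSum_fiber (B := {ω | Z ω = s}) μ hV (hZ (measurableSet_singleton s))
    have hset : ∀ c : ℤ, ({ω | V ω = c} ∩ {ω | Z ω = s}) = {ω | V ω = c ∧ Z ω = s} := by
      intro c; ext ω; exact ⟨fun h => ⟨h.1, h.2⟩, fun h => ⟨h.1, h.2⟩⟩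
    simpa only [hset] using this
  have hT : HasSum (fun c : ℤ =>
      (μ {ω | V ω = c ∧ Z ω = s}).toReal - ∑' a : ℤ, F a c) 0 := by
    have := hVZ.sub hE
    simpa using this
  have hfinal := hT.mul_left (1 / (μ {ω | Z ω = s}).toReal)
  rw [mul_zero] at hfinal
  have hδ' : (fun c : ℤ => (1 / (μ {ω | Z ω = s}).toReal) *
      ((μ {ω | V ω = c ∧ Z ω = s}).toReal - ∑' a : ℤ, F a c)) = δ := by
    funext c
    rw [hδ c, hTc c]
  rwa [hδ'] at hfinal
end

section
/- For every Borel set B ⊆ ℝ, the set function Γ ↦ Δ(B, Γ) is a signed measure on 𝒮 which is absolutely continuous with respect to μ_Z; denoting by δ(B | s) its Radon–Nikodym derivative with respect to μ_Z evaluated at s, one has, for μ_Z-almost every s ∈ 𝒮: P_s[V ∈ B] = ∫_ℝ P[V ∈ B | X = x] μ_{X|s}(dx) + δ(B | s) = ∫_ℝ ∫_B α(v, x) dv μ_{X|s}(dx) + δ(B | s). -/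
open MeasureTheory ProbabilityTheory
open scoped ENNReal

/-- Let `X, V` be real random variables and `Z` a random variable with
values in a standard Borel space `𝒮`, on a probability space `(Ω, ℰ, P)`.  Let
`κ s = P_s` be a regular conditional probability of `P` given `{Z = s}` and
`τ x B = P[V ∈ B | X = x]` a regular conditional probability of `V` given `X`, admitting
a jointly measurable density `α`: `P[V ∈ B | X = x] = ∫_B α(v,x) dv` for `μ_X`-a.e. `x`.
For Borel `B ⊆ ℝ` and `Γ ⊆ 𝒮` set
`Δ(B, Γ) := ∫_{𝒮∖Γ} [ ∫ P[V ∈ B | X = x] μ_{X|s'}(dx) − P_{s'}[V ∈ B] ] μ_Z(ds')`.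
Then for every Borel `B`, the set function `Γ ↦ Δ(B, Γ)` is a signed measure on `𝒮`,
absolutely continuous with respect to `μ_Z`; and its Radon–Nikodym derivative
`δ(B | ·)` with respect to `μ_Z` satisfies, for `μ_Z`-almost every `s`:
`P_s[V ∈ B] = ∫ P[V ∈ B | X = x] μ_{X|s}(dx) + δ(B|s)
            = ∫ (∫_B α(v,x) dv) μ_{X|s}(dx) + δ(B|s)`. -/
theorem correction_term_is_radon_nikodym_derivative
    {Ω 𝒮 : Type*} [MeasurableSpace Ω] [MeasurableSpace 𝒮] [StandardBorelSpace 𝒮]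
    (μ : Measure Ω) [IsProbabilityMeasure μ]
    (X V : Ω → ℝ) (Z : Ω → 𝒮)
    (hX : Measurable X) (hV : Measurable V) (hZ : Measurable Z)
    -- `κ` is a regular conditional probability of `P` given `{Z = s}`
    (κ : 𝒮 → Measure Ω) (hκprob : ∀ s, IsProbabilityMeasure (κ s))
    (hκmeas : ∀ A : Set Ω, MeasurableSet A → Measurable fun s => κ s A)
    (hκ : ∀ A : Set Ω, MeasurableSet A → ∀ B' : Set 𝒮, MeasurableSet B' →
      μ (A ∩ Z ⁻¹' B') = ∫⁻ s in B', κ s A ∂(μ.map Z))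
    -- `τ` is a regular conditional probability of `V` given `X`
    (τ : ℝ → Measure ℝ) (hτprob : ∀ x, IsProbabilityMeasure (τ x))
    (hτmeas : ∀ B : Set ℝ, MeasurableSet B → Measurable fun x => τ x B)
    (hτ : ∀ B C : Set ℝ, MeasurableSet B → MeasurableSet C →
      μ (V ⁻¹' B ∩ X ⁻¹' C) = ∫⁻ x in C, τ x B ∂(μ.map X))
    -- `V` has a jointly measurable conditional density `α` given `X`
    (α : ℝ → ℝ → ℝ≥0∞) (hαmeas : Measurable fun q : ℝ × ℝ => α q.1 q.2)
    (hdens : ∀ᵐ x ∂(μ.map X), ∀ B : Set ℝ, MeasurableSet B →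
      τ x B = ∫⁻ v in B, α v x ∂volume)
    (B : Set ℝ) (hB : MeasurableSet B) :
    ∃ (ξ : SignedMeasure 𝒮) (δB : 𝒮 → ℝ),
      -- `ξ` realizes the set function `Γ ↦ Δ(B, Γ)` as a signed measure on `𝒮`
      (∀ Γ : Set 𝒮, MeasurableSet Γ →
        ξ Γ = ∫ s' in Γᶜ,
          ((∫ x, (τ x B).toReal ∂((κ s').map X)) - ((κ s') (V ⁻¹' B)).toReal)
            ∂(μ.map Z)) ∧
      -- which is absolutely continuous with respect to `μ_Z`
      ξ ≪ᵥ (μ.map Z).toENNRealVectorMeasure ∧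
      -- `δB` is its Radon–Nikodym derivative with respect to `μ_Z`
      Integrable δB (μ.map Z) ∧
      (∀ Γ : Set 𝒮, MeasurableSet Γ → ξ Γ = ∫ s in Γ, δB s ∂(μ.map Z)) ∧
      -- and the conditional law of `V` given `{Z = s}` decomposes accordingly
      (∀ᵐ s ∂(μ.map Z),
        ((κ s) (V ⁻¹' B)).toReal
            = (∫ x, (τ x B).toReal ∂((κ s).map X)) + δB s ∧
        ((κ s) (V ⁻¹' B)).toReal
            = (∫ x, (∫⁻ v in B, α v x ∂volume).toReal ∂((κ s).map X)) + δB s) := by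
  set ν := μ.map Z with hν
  have hνprob : IsProbabilityMeasure ν := Measure.isProbabilityMeasure_map hZ.aemeasurable
  have hκm : Measurable κ := Measure.measurable_of_measurable_coe κ hκmeas
  -- measurable function ω ↦ τ (X ω) B
  have hgm : Measurable fun ω => τ (X ω) B := (hτmeas B hB).comp hX
  -- lf s = ∫⁻ ω, τ (X ω) B ∂(κ s)
  set lf : 𝒮 → ℝ≥0∞ := fun s => ∫⁻ ω, τ (X ω) B ∂(κ s) with hlf
  have hlfm : Measurable lf := (Measure.measurable_lintegral hgm).comp hκm
  have hτle : ∀ x, τ x B ≤ 1 := fun x => by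
    have := hτprob x
    calc τ x B ≤ τ x Set.univ := measure_mono (Set.subset_univ _)
    _ = 1 := measure_univ
  have hlfle : ∀ s, lf s ≤ 1 := fun s => by
    have := hκprob s
    calc lf s ≤ ∫⁻ _, 1 ∂(κ s) := lintegral_mono fun ω => hτle _
    _ = 1 := by simp
  -- The inner integral equals (lf s).toReal
  have hI : ∀ s, (∫ x, (τ x B).toReal ∂((κ s).map X)) = (lf s).toReal := by
    intro s
    rw [integral_map hX.aemeasurable (hτmeas B hB).ennreal_toReal.aestronglyMeasurable]
    exact integral_toReal hgm.aemeasurable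
      (Filter.Eventually.of_forall fun ω => lt_of_le_of_lt (hτle _) ENNReal.one_lt_top)
  -- the candidate density
  set δB : 𝒮 → ℝ := fun s => ((κ s) (V ⁻¹' B)).toReal - (lf s).toReal with hδ
  have hκVm : Measurable fun s => (κ s) (V ⁻¹' B) := hκmeas _ (hV hB)
  have hκVle : ∀ s, (κ s) (V ⁻¹' B) ≤ 1 := fun s => by
    have := hκprob s
    calc (κ s) (V ⁻¹' B) ≤ (κ s) Set.univ := measure_mono (Set.subset_univ _)
    _ = 1 := measure_univ
  have hδm : Measurable δB := hκVm.ennreal_toReal.sub hlfm.ennreal_toReal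
  have hδbd : ∀ s, ‖δB s‖ ≤ 2 := by
    intro s
    have h1 : ((κ s) (V ⁻¹' B)).toReal ≤ 1 := by
      simpa using ENNReal.toReal_mono ENNReal.one_ne_top (hκVle s)
    have h2 : (lf s).toReal ≤ 1 := by
      simpa using ENNReal.toReal_mono ENNReal.one_ne_top (hlfle s)
    have h3 : (0:ℝ) ≤ ((κ s) (V ⁻¹' B)).toReal := ENNReal.toReal_nonneg
    have h4 : (0:ℝ) ≤ (lf s).toReal := ENNReal.toReal_nonneg
    rw [Real.norm_eq_abs, abs_le]
    constructor <;> simp only [hδ] <;> linarith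
  have hδint : Integrable δB ν :=
    (integrable_const (2:ℝ)).mono' hδm.aestronglyMeasurable
      (Filter.Eventually.of_forall hδbd)
  -- μ disintegrates along κ
  have hdis : ∀ A : Set Ω, MeasurableSet A → μ A = ∫⁻ s, κ s A ∂ν := by
    intro A hA
    have := hκ A hA Set.univ MeasurableSet.univ
    simpa using this
  have hbind : μ = ν.bind κ := by
    ext A hA
    rw [Measure.bind_apply hA hκm.aemeasurable, hdis A hA]
  -- total lintegral identities
  have hLκ : ∫⁻ s, (κ s) (V ⁻¹' B) ∂ν = μ (V ⁻¹' B) := (hdis _ (hV hB)).symm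
  have hLlf : ∫⁻ s, lf s ∂ν = μ (V ⁻¹' B) := by
    rw [hlf]
    rw [← Measure.lintegral_bind hκm.aemeasurable hgm.aemeasurable, ← hbind]
    rw [← lintegral_map (hτmeas B hB) hX]
    have := hτ B Set.univ hB MeasurableSet.univ
    simp only [Set.preimage_univ, Set.inter_univ, Measure.restrict_univ] at this
    exact this.symm
  -- total integral of δB is zero
  have hint1 : Integrable (fun s => ((κ s) (V ⁻¹' B)).toReal) ν := by
    refine (integrable_const (1:ℝ)).mono' hκVm.ennreal_toReal.aestronglyMeasurable
      (Filter.Eventually.of_forall fun s => ?_)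
    rw [Real.norm_eq_abs, abs_of_nonneg ENNReal.toReal_nonneg]
    simpa using ENNReal.toReal_mono ENNReal.one_ne_top (hκVle s)
  have hint2 : Integrable (fun s => (lf s).toReal) ν := by
    refine (integrable_const (1:ℝ)).mono' hlfm.ennreal_toReal.aestronglyMeasurable
      (Filter.Eventually.of_forall fun s => ?_)
    rw [Real.norm_eq_abs, abs_of_nonneg ENNReal.toReal_nonneg]
    simpa using ENNReal.toReal_mono ENNReal.one_ne_top (hlfle s)
  have hzero : ∫ s, δB s ∂ν = 0 := by
    rw [hδ]
    rw [integral_sub hint1 hint2]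
    rw [integral_toReal hκVm.aemeasurable
      (Filter.Eventually.of_forall fun s => lt_of_le_of_lt (hκVle s) ENNReal.one_lt_top)]
    rw [integral_toReal hlfm.aemeasurable
      (Filter.Eventually.of_forall fun s => lt_of_le_of_lt (hlfle s) ENNReal.one_lt_top)]
    rw [hLκ, hLlf, sub_self]
  -- zero total integral gives the complement formula
  refine ⟨ν.withDensityᵥ δB, δB, ?_, ν.withDensityᵥ_absolutelyContinuous δB, hδint, ?_, ?_⟩
  · intro Γ hΓ
    rw [withDensityᵥ_apply hδint hΓ]
    have hsplit : ∫ s in Γ, δB s ∂ν + ∫ s in Γᶜ, δB s ∂ν = ∫ s, δB s ∂ν :=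
      integral_add_compl hΓ hδint
    have : ∫ s in Γ, δB s ∂ν = - ∫ s in Γᶜ, δB s ∂ν := by
      rw [hzero] at hsplit; linarith
    rw [this, ← integral_neg]
    refine setIntegral_congr_fun hΓ.compl fun s _ => ?_
    simp only [hδ, hI s]
    ring
  · intro Γ hΓ
    exact withDensityᵥ_apply hδint hΓ
  · -- a.e. decomposition
    -- first, for a.e. s the density formula holds (κ s).map X-a.e.
    classical
    set N : Set ℝ := toMeasurable (μ.map X)
      {x | ¬ ∀ B : Set ℝ, MeasurableSet B → τ x B = ∫⁻ v in B, α v x ∂volume} with hN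
    have hNmeas : MeasurableSet N := measurableSet_toMeasurable _ _
    have hNnull : (μ.map X) N = 0 := by
      rw [hN, measure_toMeasurable]
      exact hdens
    have hmapX : (μ.map X) N = μ (X ⁻¹' N) := Measure.map_apply hX hNmeas
    have hκN : ∀ᵐ s ∂ν, κ s (X ⁻¹' N) = 0 := by
      have h0 : ∫⁻ s, κ s (X ⁻¹' N) ∂ν = 0 := by
        rw [← hdis _ (hX hNmeas), ← hmapX, hNnull]
      exact (lintegral_eq_zero_iff (hκmeas _ (hX hNmeas))).mp h0
    filter_upwards [hκN] with s hs
    have hmapN : ((κ s).map X) N = 0 := by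
      rw [Measure.map_apply hX hNmeas]; exact hs
    have hae : ∀ᵐ x ∂((κ s).map X), τ x B = ∫⁻ v in B, α v x ∂volume := by
      have : ∀ᵐ x ∂((κ s).map X), x ∉ N := by
        rw [ae_iff]
        simpa using measure_mono_null (fun x hx => by simpa using hx) hmapN
      filter_upwards [this] with x hx
      by_contra h
      exact hx (subset_toMeasurable _ _ (by intro hmem; exact h (hmem B hB)))
    have heq : ∫ x, (τ x B).toReal ∂((κ s).map X)
        = ∫ x, (∫⁻ v in B, α v x ∂volume).toReal ∂((κ s).map X) :=
      integral_congr_ae (by filter_upwards [hae] with x hx; rw [hx])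
    constructor
    · simp only [hδ]; ring_nf; rw [hI s]; ring
    · rw [← heq]; simp only [hδ]; rw [hI s]; ring
end

section
/- If |⟨x_k, v_j⟩| < 1 for all k, j ∈ {1, …, n}, then Â and B̂ do not commute: ÂB̂ ≠ B̂Â. -/
/-- Let `H` be a finite-dimensional complex Hilbert space of
dimension `n ≥ 1` with two orthonormal bases `(x k)` and `(v j)`, let
`a 1, …, a n` and `b 1, …, b n` be two families of pairwise distinct real numbers, and
let `Â = ∑ k, a k ⟨x k, ·⟩ x k` and `B̂ = ∑ j, b j ⟨v j, ·⟩ v j` be the corresponding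
self-adjoint operators, diagonal in the bases `(x k)` and `(v j)` respectively.
If `|⟨x k, v j⟩| < 1` for all `k, j`, then `Â` and `B̂` do not commute:
`Â B̂ ≠ B̂ Â`. -/
theorem non_orthogonal_bases_operators_do_not_commute
    {H : Type*} [NormedAddCommGroup H] [InnerProductSpace ℂ H]
    [FiniteDimensional ℂ H] {n : ℕ} (hn : 0 < n)
    (x v : OrthonormalBasis (Fin n) ℂ H)
    (a b : Fin n → ℝ) (ha : Function.Injective a) (hb : Function.Injective b)
    (A B : H →ₗ[ℂ] H)
    (hA : ∀ ψ : H, A ψ = ∑ k, ((a k : ℂ) * inner ℂ (x k) ψ) • x k)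
    (hB : ∀ ψ : H, B ψ = ∑ j, ((b j : ℂ) * inner ℂ (v j) ψ) • v j)
    (hover : ∀ k j, ‖(inner ℂ (x k) (v j) : ℂ)‖ < 1) :
    A ∘ₗ B ≠ B ∘ₗ A := by
  intro h
  set j : Fin n := ⟨0, hn⟩
  -- B (v j) = b j • v j
  have hBv : B (v j) = (b j : ℂ) • v j := by
    rw [hB]
    rw [Finset.sum_eq_single j]
    · simp [orthonormal_iff_ite.mp v.orthonormal]
    · intro i _ hij
      simp [orthonormal_iff_ite.mp v.orthonormal, hij]
    · simp
  -- key : B (A (v j)) = b j • A (v j)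
  have key : B (A (v j)) = (b j : ℂ) • A (v j) := by
    have := congrArg (fun T : H →ₗ[ℂ] H => T (v j)) h
    simp only [LinearMap.comp_apply] at this
    rw [hBv, map_smul] at this
    exact this.symm
  -- inner ℂ (v m) (A (v j)) = 0 for m ≠ j
  have hcoef : ∀ m, m ≠ j → (inner ℂ (v m) (A (v j)) : ℂ) = 0 := by
    intro m hm
    have h1 : (inner ℂ (v m) (B (A (v j))) : ℂ) = (b m : ℂ) * inner ℂ (v m) (A (v j)) := by
      rw [hB]
      exact v.orthonormal.inner_right_fintype (fun i => (b i : ℂ) * inner ℂ (v i) (A (v j))) m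
    have h2 : (inner ℂ (v m) (B (A (v j))) : ℂ) = (b j : ℂ) * inner ℂ (v m) (A (v j)) := by
      rw [key, inner_smul_right]
    have hbne : (b m : ℂ) ≠ (b j : ℂ) := by
      simp only [ne_eq, Complex.ofReal_inj]
      exact fun hbe => hm (hb hbe)
    have h3 := sub_eq_zero.mpr (h1.symm.trans h2)
    rw [← sub_mul] at h3
    rcases mul_eq_zero.mp h3 with h' | h'
    · exact absurd (sub_eq_zero.mp h') hbne
    · exact h'
  -- so A (v j) = c • v j
  set c : ℂ := inner ℂ (v j) (A (v j)) with hc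
  have hAv : A (v j) = c • v j := by
    have := v.sum_repr' (A (v j))
    rw [Finset.sum_eq_single j] at this
    · exact this.symm
    · intro i _ hij
      rw [hcoef i hij, zero_smul]
    · simp
  -- for each k : (a k - c) * ⟨x k, v j⟩ = 0
  have hk : ∀ k, ((a k : ℂ) - c) * inner ℂ (x k) (v j) = 0 := by
    intro k
    have h1 : (inner ℂ (x k) (A (v j)) : ℂ) = (a k : ℂ) * inner ℂ (x k) (v j) := by
      rw [hA]
      exact x.orthonormal.inner_right_fintype (fun i => (a i : ℂ) * inner ℂ (x i) (v j)) k
    have h2 : (inner ℂ (x k) (A (v j)) : ℂ) = c * inner ℂ (x k) (v j) := by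
      rw [hAv, inner_smul_right]
    rw [h2] at h1
    rw [sub_mul, h1, sub_self]
  by_cases hex : ∃ k0, (inner ℂ (x k0) (v j) : ℂ) ≠ 0
  · obtain ⟨k0, hk0⟩ := hex
    have hak0 : (a k0 : ℂ) = c := by
      rcases mul_eq_zero.mp (hk k0) with h' | h'
      · exact sub_eq_zero.mp h'
      · exact absurd h' hk0
    have hzero : ∀ i, i ≠ k0 → (inner ℂ (x i) (v j) : ℂ) = 0 := by
      intro i hi
      rcases mul_eq_zero.mp (hk i) with h' | h'
      · exfalso
        have : (a i : ℂ) = (a k0 : ℂ) := by rw [sub_eq_zero.mp h', hak0]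
        exact hi (ha (by exact_mod_cast this))
      · exact h'
    have hvj : v j = (inner ℂ (x k0) (v j) : ℂ) • x k0 := by
      have := x.sum_repr' (v j)
      rw [Finset.sum_eq_single k0] at this
      · exact this.symm
      · intro i _ hi
        rw [hzero i hi, zero_smul]
      · simp
    have hnorm : ‖v j‖ = ‖(inner ℂ (x k0) (v j) : ℂ)‖ := by
      conv_lhs => rw [hvj]
      rw [norm_smul, x.orthonormal.1 k0, mul_one]
    rw [v.orthonormal.1 j] at hnorm
    have := hover k0 j
    rw [← hnorm] at this
    exact absurd this (by norm_num)
  · push_neg at hex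
    have hvj : v j = 0 := by
      have := x.sum_repr' (v j)
      rw [Finset.sum_eq_zero (fun i _ => by rw [hex i, zero_smul])] at this
      exact this.symm
    have := v.orthonormal.1 j
    rw [hvj, norm_zero] at this
    norm_num at this
end
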